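/- arXiv:2507.13583 — 3 statements merged into one kernel-verified Lean document; each statement's English description precedes it below -/
import Mathlib

section
/- Let 0 < φ < π, λ ∈ ℂ, and define P_n^{(λ)}(x;φ) = e^{inφ} Σ_{k=0}^{n} (λ+ix)_k (λ−ix)_{n−k} e^{−2ikφ} / (k! (n−k)!). Let T be the central difference operator (Tf)(x) = (f(x+i/2) − f(x−i/2))/i. Then for n ≥ 1 and all complex x, T[P_n^{(λ)}(·;φ)](x) = 2 sin φ · P_{n−1}^{(λ+1/2)}(x;φ). -/
open Complex Finset

/-- The Pochhammer symbol (rising factorial) on ℂ. -/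
def poch (a : ℂ) : ℕ → ℂ
  | 0 => 1
  | k + 1 => poch a k * (a + k)

/-- The Meixner–Pollaczek polynomial, as a finite sum. -/
noncomputable def MP (l : ℂ) (φ : ℝ) (n : ℕ) (x : ℂ) : ℂ :=
  Complex.exp (I * n * φ) * ∑ k ∈ range (n + 1),
    poch (l + I * x) k * poch (l - I * x) (n - k) * Complex.exp (-2 * I * k * φ) /
      (Nat.factorial k * Nat.factorial (n - k))

/-- The central difference operator. -/
noncomputable def T (f : ℂ → ℂ) (x : ℂ) : ℂ := (f (x + I / 2) - f (x - I / 2)) / I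

lemma poch_zero (a : ℂ) : poch a 0 = 1 := rfl

lemma poch_shift (c : ℂ) (j : ℕ) : poch (c - 1) (j + 1) = (c - 1) * poch c j := by
  induction j with
  | zero => simp [poch]
  | succ j ih =>
    have h1 : poch (c - 1) (j + 1 + 1) = poch (c - 1) (j + 1) * (c - 1 + (j + 1 : ℕ)) := rfl
    have h2 : poch c (j + 1) = poch c j * (c + j) := rfl
    rw [h1, ih, h2]
    push_cast
    ring

lemma poch_sub_one (c : ℂ) (j : ℕ) :
    poch (c - 1) (j + 1) = poch c (j + 1) - (j + 1 : ℕ) * poch c j := by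
  rw [poch_shift]
  have h2 : poch c (j + 1) = poch c j * (c + j) := rfl
  rw [h2]
  push_cast
  ring

lemma termkey (A B : ℂ) (m k : ℕ) (hk : k ≤ m + 1) :
    poch (A - 1) k * poch B (m + 1 - k) - poch A k * poch (B - 1) (m + 1 - k)
      = (m + 1 - k : ℕ) * (poch A k * poch B (m - k))
        - (k : ℕ) * (poch A (k - 1) * poch B (m + 1 - k)) := by
  by_cases hk1 : k = m + 1
  · subst hk1
    rw [Nat.sub_self, Nat.add_sub_cancel]
    simp only [poch_zero, mul_one, Nat.cast_zero, zero_mul, zero_sub]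
    rw [poch_sub_one A m]
    push_cast
    ring
  · have hk2 : k ≤ m := by omega
    cases k with
    | zero =>
      simp only [poch_zero, one_mul, Nat.sub_zero, Nat.cast_zero, zero_mul, sub_zero]
      rw [poch_sub_one B m]
      push_cast
      ring
    | succ j =>
      have hr : m + 1 - (j + 1) = (m - (j + 1)) + 1 := by omega
      have hj : j + 1 - 1 = j := rfl
      rw [hr, hj, poch_sub_one A j, poch_sub_one B (m - (j + 1))]
      push_cast
      ring

lemma sum1 (A B q : ℂ) (m : ℕ) :
    ∑ k ∈ range (m + 2), (m + 1 - k : ℕ) * (poch A k * poch B (m - k)) * q ^ k /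
        ((Nat.factorial k : ℂ) * (Nat.factorial (m + 1 - k) : ℂ))
      = ∑ j ∈ range (m + 1), poch A j * poch B (m - j) * q ^ j /
        ((Nat.factorial j : ℂ) * (Nat.factorial (m - j) : ℂ)) := by
  rw [Finset.sum_range_succ]
  simp only [Nat.sub_self, Nat.cast_zero, zero_mul, zero_div, add_zero]
  refine Finset.sum_congr rfl fun k hk => ?_
  have hk' : k ≤ m := by have := mem_range.mp hk; omega
  rw [show m + 1 - k = (m - k) + 1 from by omega, Nat.factorial_succ]
  have h3 : ((m - k : ℕ) : ℂ) + 1 ≠ 0 := Nat.cast_add_one_ne_zero _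
  have hcast : ((m - k + 1 : ℕ) : ℂ) = ((m - k : ℕ) : ℂ) + 1 := by push_cast; ring
  have hfac : (((m - k + 1) * (m - k).factorial : ℕ) : ℂ)
      = (((m - k : ℕ) : ℂ) + 1) * ((m - k).factorial : ℂ) := by push_cast; ring
  rw [hcast, hfac,
    show ((k.factorial : ℂ)) * ((((m - k : ℕ) : ℂ) + 1) * ((m - k).factorial : ℂ))
      = (((m - k : ℕ) : ℂ) + 1) * ((k.factorial : ℂ) * ((m - k).factorial : ℂ)) from by ring,
    show (((m - k : ℕ) : ℂ) + 1) * (poch A k * poch B (m - k)) * q ^ k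
      = (((m - k : ℕ) : ℂ) + 1) * (poch A k * poch B (m - k) * q ^ k) from by ring]
  exact mul_div_mul_left _ _ h3

lemma sum2 (A B q : ℂ) (m : ℕ) :
    ∑ k ∈ range (m + 2), (k : ℕ) * (poch A (k - 1) * poch B (m + 1 - k)) * q ^ k /
        ((Nat.factorial k : ℂ) * (Nat.factorial (m + 1 - k) : ℂ))
      = q * ∑ j ∈ range (m + 1), poch A j * poch B (m - j) * q ^ j /
        ((Nat.factorial j : ℂ) * (Nat.factorial (m - j) : ℂ)) := by
  rw [Finset.sum_range_succ']
  simp only [Nat.cast_zero, zero_mul, zero_div, add_zero, Nat.cast_ofNat]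
  rw [Finset.mul_sum]
  refine Finset.sum_congr rfl fun j hj => ?_
  rw [show j + 1 - 1 = j from rfl, show m + 1 - (j + 1) = m - j from by omega,
    Nat.factorial_succ]
  have h1 : ((m - j).factorial : ℂ) ≠ 0 := Nat.cast_ne_zero.mpr (Nat.factorial_ne_zero _)
  have h2 : ((j).factorial : ℂ) ≠ 0 := Nat.cast_ne_zero.mpr (Nat.factorial_ne_zero _)
  have h3 : ((j : ℕ) : ℂ) + 1 ≠ 0 := Nat.cast_add_one_ne_zero _
  push_cast
  field_simp
  ring

lemma keysum (A B q : ℂ) (m : ℕ) :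
    (∑ k ∈ range (m + 2), poch (A - 1) k * poch B (m + 1 - k) * q ^ k /
        ((Nat.factorial k : ℂ) * (Nat.factorial (m + 1 - k) : ℂ)))
      - (∑ k ∈ range (m + 2), poch A k * poch (B - 1) (m + 1 - k) * q ^ k /
        ((Nat.factorial k : ℂ) * (Nat.factorial (m + 1 - k) : ℂ)))
      = (1 - q) * ∑ j ∈ range (m + 1), poch A j * poch B (m - j) * q ^ j /
        ((Nat.factorial j : ℂ) * (Nat.factorial (m - j) : ℂ)) := by
  rw [← Finset.sum_sub_distrib]
  have step : ∀ k ∈ range (m + 2),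
      poch (A - 1) k * poch B (m + 1 - k) * q ^ k /
          ((Nat.factorial k : ℂ) * (Nat.factorial (m + 1 - k) : ℂ))
        - poch A k * poch (B - 1) (m + 1 - k) * q ^ k /
          ((Nat.factorial k : ℂ) * (Nat.factorial (m + 1 - k) : ℂ))
      = (m + 1 - k : ℕ) * (poch A k * poch B (m - k)) * q ^ k /
          ((Nat.factorial k : ℂ) * (Nat.factorial (m + 1 - k) : ℂ))
        - (k : ℕ) * (poch A (k - 1) * poch B (m + 1 - k)) * q ^ k /
          ((Nat.factorial k : ℂ) * (Nat.factorial (m + 1 - k) : ℂ)) := by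
    intro k hk
    have hk' : k ≤ m + 1 := by have := mem_range.mp hk; omega
    have tk := termkey A B m k hk'
    rw [div_sub_div_same, div_sub_div_same, ← sub_mul, ← sub_mul, tk]
  rw [Finset.sum_congr rfl step, Finset.sum_sub_distrib, sum1, sum2]
  ring

theorem T_MP (l : ℂ) (φ : ℝ) (hφ : 0 < φ ∧ φ < Real.pi) (n : ℕ) (hn : 1 ≤ n) (x : ℂ) :
    T (fun y => MP l φ n y) x = 2 * Real.sin φ * MP (l + 1 / 2) φ (n - 1) x := by
  obtain ⟨m, rfl⟩ : ∃ m, n = m + 1 := ⟨n - 1, by omega⟩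
  simp only [T, MP, Nat.add_sub_cancel]
  have h1 : l + I * (x + I / 2) = l + 1 / 2 + I * x - 1 := by
    linear_combination (1 / 2 : ℂ) * Complex.I_mul_I
  have h2 : l - I * (x + I / 2) = l + 1 / 2 - I * x := by
    linear_combination (-(1 / 2) : ℂ) * Complex.I_mul_I
  have h3 : l + I * (x - I / 2) = l + 1 / 2 + I * x := by
    linear_combination (-(1 / 2) : ℂ) * Complex.I_mul_I
  have h4 : l - I * (x - I / 2) = l + 1 / 2 - I * x - 1 := by
    linear_combination (1 / 2 : ℂ) * Complex.I_mul_I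
  have hq : ∀ k : ℕ, Complex.exp (-2 * I * (k : ℂ) * (φ : ℂ))
      = Complex.exp (-2 * I * (φ : ℂ)) ^ k := by
    intro k
    rw [show -2 * I * (k : ℂ) * (φ : ℂ) = (k : ℂ) * (-2 * I * φ) by ring,
      Complex.exp_nat_mul]
  simp only [h1, h2, h3, h4, hq]
  set q := Complex.exp (-2 * I * (φ : ℂ)) with hqdef
  have key := keysum (l + 1 / 2 + I * x) (l + 1 / 2 - I * x) q m
  have hsin : Complex.sin (φ : ℂ)
      = (Complex.exp (-(φ : ℂ) * I) - Complex.exp ((φ : ℂ) * I)) * I / 2 := rfl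
  have e1 : Complex.exp (I * ((m + 1 : ℕ) : ℂ) * φ)
      = Complex.exp (I * (m : ℂ) * φ) * Complex.exp (I * (φ : ℂ)) := by
    rw [← Complex.exp_add]
    congr 1
    push_cast
    ring
  have e2 : Complex.exp (I * (φ : ℂ)) * q = Complex.exp (-(φ : ℂ) * I) := by
    rw [hqdef, ← Complex.exp_add]
    congr 1
    ring
  have e4 : Complex.exp ((φ : ℂ) * I) = Complex.exp (I * (φ : ℂ)) := by
    rw [mul_comm]
  have E' : Complex.exp (I * ((m + 1 : ℕ) : ℂ) * φ) * (1 - q)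
      = 2 * (Real.sin φ : ℂ) * Complex.exp (I * (m : ℂ) * φ) * I := by
    rw [Complex.ofReal_sin, hsin, e1, e4, ← e2]
    linear_combination Complex.exp (I * (m : ℂ) * φ) * Complex.exp (I * (φ : ℂ)) * (1 - q) *
      Complex.I_mul_I
  have E : Complex.exp (I * ((m + 1 : ℕ) : ℂ) * φ) * (1 - q) / I
      = 2 * (Real.sin φ : ℂ) * Complex.exp (I * (m : ℂ) * φ) := by
    rw [div_eq_iff Complex.I_ne_zero]
    linear_combination E'
  linear_combination (Complex.exp (I * ((m + 1 : ℕ) : ℂ) * φ) / I) * key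
    + (∑ j ∈ range (m + 1), poch (l + 1 / 2 + I * x) j * poch (l + 1 / 2 - I * x) (m - j) *
        q ^ j / ((Nat.factorial j : ℂ) * (Nat.factorial (m - j) : ℂ))) * E
end

section
/- Let 0 < φ < π, λ ∈ ℂ, and define P_n^{(λ)}(x;φ) via the finite sum P_n^{(λ)}(x;φ) = e^{inφ} Σ_{k=0}^{n} (λ+ix)_k (λ−ix)_{n−k} e^{−2ikφ} / (k! (n−k)!). Then for complex t with |t| < 1 and real x, Σ_{n=0}^∞ P_n^{(λ)}(x;φ) t^n = (1 − t e^{iφ})^{−(λ−ix)} (1 − t e^{−iφ})^{−(λ+ix)}, where the complex powers use the principal branch of (1 − w)^{−a} for |w| < 1. -/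
open Complex Finset

/-- Real Pochhammer for norm bounds. -/
def pochR (a : ℝ) : ℕ → ℝ
  | 0 => 1
  | k + 1 => pochR a k * (a + k)

lemma pochR_nonneg {a : ℝ} (ha : 0 ≤ a) (k : ℕ) : 0 ≤ pochR a k := by
  induction k with
  | zero => norm_num [pochR]
  | succ k ih => exact mul_nonneg ih (by positivity)

lemma norm_poch_le (a : ℂ) (k : ℕ) : ‖poch a k‖ ≤ pochR ‖a‖ k := by
  induction k with
  | zero => simp [poch, pochR]
  | succ k ih =>
    rw [poch, pochR, norm_mul]
    have h1 : ‖a + (k : ℂ)‖ ≤ ‖a‖ + k := by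
      calc ‖a + (k : ℂ)‖ ≤ ‖a‖ + ‖(k : ℂ)‖ := norm_add_le _ _
      _ = ‖a‖ + k := by simp
    exact mul_le_mul ih h1 (norm_nonneg _) (pochR_nonneg (norm_nonneg a) k)

lemma summable_pochR_geom (a : ℝ) (ha : 0 ≤ a) {r : ℝ} (hr0 : 0 ≤ r) (hr : r < 1) :
    Summable (fun k : ℕ => pochR a k / k.factorial * r ^ k) := by
  set r' : ℝ := (1 + r) / 2 with hr'
  have hr'1 : r' < 1 := by rw [hr']; linarith
  obtain ⟨N, hN⟩ := exists_nat_ge ((a * r - r') / (r' - r))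
  refine summable_of_ratio_norm_eventually_le hr'1 ?_
  filter_upwards [Filter.eventually_ge_atTop N] with n hn
  have hterm : 0 ≤ pochR a n / n.factorial * r ^ n := by
    have := pochR_nonneg ha n
    positivity
  have hnext : pochR a (n+1) / (n+1).factorial * r ^ (n+1)
      = (pochR a n / n.factorial * r ^ n) * ((a + n) * r / (n + 1)) := by
    rw [pochR, Nat.factorial_succ]
    push_cast
    field_simp
    ring
  have hrat : (a + n) * r / (n + 1) ≤ r' := by
    rw [div_le_iff₀ (by positivity)]
    have h1 : ((N : ℝ)) ≤ n := by exact_mod_cast hn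
    have h2 : (a * r - r') / (r' - r) ≤ (n : ℝ) := le_trans hN h1
    have hd : 0 < r' - r := by rw [hr']; linarith
    rw [div_le_iff₀ hd] at h2
    nlinarith
  calc ‖pochR a (n+1) / (n+1).factorial * r ^ (n+1)‖
      = (pochR a n / n.factorial * r ^ n) * ((a + n) * r / (n + 1)) := by
        rw [hnext, Real.norm_eq_abs, _root_.abs_of_nonneg (mul_nonneg hterm (by positivity))]
    _ ≤ (pochR a n / n.factorial * r ^ n) * r' := by
        exact mul_le_mul_of_nonneg_left hrat hterm
    _ = r' * ‖pochR a n / n.factorial * r ^ n‖ := by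
        rw [Real.norm_eq_abs, _root_.abs_of_nonneg hterm]; ring

lemma summable_norm_binom (a w : ℂ) (hw : ‖w‖ < 1) :
    Summable (fun k : ℕ => ‖poch a k / k.factorial * w ^ k‖) := by
  refine Summable.of_nonneg_of_le (fun k => norm_nonneg _) (fun k => ?_)
    (summable_pochR_geom ‖a‖ (norm_nonneg a) (norm_nonneg w) hw)
  rw [norm_mul, norm_div, norm_pow]
  rw [show ‖((k.factorial : ℕ) : ℂ)‖ = (k.factorial : ℝ) by simp]
  have hf : (0:ℝ) < k.factorial := by exact_mod_cast Nat.factorial_pos k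
  have h1 : ‖poch a k‖ / (k.factorial : ℝ) ≤ pochR ‖a‖ k / k.factorial :=
    by gcongr; exact norm_poch_le a k
  exact mul_le_mul_of_nonneg_right h1 (by positivity)

lemma one_sub_mem_slitPlane {z : ℂ} (hz : ‖z‖ < 1) : (1 - z) ∈ Complex.slitPlane := by
  rw [Complex.mem_slitPlane_iff]
  left
  have h := Complex.abs_re_le_norm z
  rw [Complex.sub_re, Complex.one_re]
  have := abs_le.mp h
  linarith [this.2]

lemma hasDerivAt_one_sub_cpow (b : ℂ) {z : ℂ} (hz : ‖z‖ < 1) :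
    HasDerivAt (fun z => (1 - z) ^ b) (-b * (1 - z) ^ (b - 1)) z := by
  have h1 : HasDerivAt (fun z : ℂ => 1 - z) (-1) z := by
    simpa using (hasDerivAt_id z).const_sub 1
  have := h1.cpow_const (c := b) (one_sub_mem_slitPlane hz)
  convert this using 1
  ring

lemma iteratedDeriv_one_sub_cpow (a : ℂ) (n : ℕ) :
    ∀ z ∈ Metric.ball (0:ℂ) 1,
      iteratedDeriv n (fun z => (1 - z) ^ (-a)) z = poch a n * (1 - z) ^ (-a - n) := by
  induction n with
  | zero =>
    intro z _
    simp [poch]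
  | succ n ih =>
    intro z hz
    rw [iteratedDeriv_succ]
    have hcong : deriv (iteratedDeriv n (fun z => (1 - z) ^ (-a))) z
        = deriv (fun z => poch a n * (1 - z) ^ (-a - n)) z := by
      apply Filter.EventuallyEq.deriv_eq
      exact Filter.eventuallyEq_of_mem (Metric.isOpen_ball.mem_nhds hz) ih
    rw [hcong]
    have hz' : ‖z‖ < 1 := by simpa using hz
    have hd : HasDerivAt (fun z => poch a n * (1 - z) ^ (-a - n))
        (poch a n * (-(-a - n) * (1 - z) ^ (-a - n - 1))) z :=
      (hasDerivAt_one_sub_cpow (-a - n) hz').const_mul (poch a n)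
    rw [hd.deriv, poch]
    push_cast
    ring_nf

lemma hasSum_binom (a : ℂ) {w : ℂ} (hw : ‖w‖ < 1) :
    HasSum (fun k : ℕ => poch a k / (k.factorial : ℂ) * w ^ k) ((1 - w) ^ (-a)) := by
  have hf : DifferentiableOn ℂ (fun z : ℂ => (1 - z) ^ (-a)) (Metric.ball 0 1) := by
    intro z hz
    exact (hasDerivAt_one_sub_cpow (-a) (by simpa using hz)).differentiableAt.differentiableWithinAt
  have hw' : w ∈ Metric.ball (0:ℂ) 1 := by simpa using hw
  have H := Complex.hasSum_taylorSeries_on_ball hf hw'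
  have h0 : (0:ℂ) ∈ Metric.ball (0:ℂ) 1 := by simp
  have heq : (fun k : ℕ => poch a k / k.factorial * w ^ k)
      = fun k : ℕ => (k.factorial : ℂ)⁻¹ • (w - 0) ^ k • iteratedDeriv k (fun z : ℂ => (1 - z) ^ (-a)) 0 := by
    funext k
    rw [iteratedDeriv_one_sub_cpow a k 0 h0]
    simp only [sub_zero, smul_eq_mul, Complex.one_cpow]
    ring
  rw [heq]
  exact H

theorem MP_generating_function (l : ℂ) (φ : ℝ) (hφ : 0 < φ ∧ φ < Real.pi)
    (x : ℝ) (t : ℂ) (ht : ‖t‖ < 1) :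
    HasSum (fun n : ℕ => MP l φ n (x : ℂ) * t ^ n)
      ((1 - t * Complex.exp (I * φ)) ^ (-(l - I * x)) *
        (1 - t * Complex.exp (-(I * φ))) ^ (-(l + I * x))) := by
  have hn1 : ‖t * Complex.exp (-(I * φ))‖ < 1 := by
    rw [norm_mul, Complex.norm_exp]
    simp [Complex.mul_re]
    exact ht
  have hn2 : ‖t * Complex.exp (I * φ)‖ < 1 := by
    rw [norm_mul, Complex.norm_exp]
    simp [Complex.mul_re]
    exact ht
  set B : ℂ := l + I * x with hB
  set A : ℂ := l - I * x with hA
  set f : ℕ → ℂ := fun k => poch B k / (k.factorial : ℂ) * (t * Complex.exp (-(I * φ))) ^ k with hfdef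
  set g : ℕ → ℂ := fun k => poch A k / (k.factorial : ℂ) * (t * Complex.exp (I * φ)) ^ k with hgdef
  have hf : HasSum f ((1 - t * Complex.exp (-(I * φ))) ^ (-B)) := hasSum_binom B hn1
  have hg : HasSum g ((1 - t * Complex.exp (I * φ)) ^ (-A)) := hasSum_binom A hn2
  have hfs : Summable fun k => ‖f k‖ := summable_norm_binom B _ hn1
  have hgs : Summable fun k => ‖g k‖ := summable_norm_binom A _ hn2
  have key := hasSum_sum_range_mul_of_summable_norm hfs hgs
  rw [hf.tsum_eq, hg.tsum_eq] at key
  have heq : (fun n : ℕ => MP l φ n (x : ℂ) * t ^ n)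
      = fun n : ℕ => ∑ k ∈ range (n + 1), f k * g (n - k) := by
    funext n
    rw [MP, Finset.mul_sum, Finset.sum_mul]
    refine Finset.sum_congr rfl fun k hk => ?_
    have hk' : k ≤ n := by
      simp only [Finset.mem_range] at hk; omega
    have htpow : t ^ k * t ^ (n - k) = t ^ n := by
      rw [← pow_add]; congr 1; omega
    have hcast : ((n - k : ℕ) : ℂ) = (n : ℂ) - (k : ℂ) := by
      push_cast [Nat.cast_sub hk']; ring
    have hexp : Complex.exp (I * n * φ) * Complex.exp (-2 * I * k * φ)
        = Complex.exp (-(I * φ)) ^ k * Complex.exp (I * φ) ^ (n - k) := by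
      rw [← Complex.exp_nat_mul, ← Complex.exp_nat_mul, ← Complex.exp_add, ← Complex.exp_add]
      congr 1
      rw [hcast]; ring
    have hrhs : f k * g (n - k)
        = (poch B k * poch A (n - k) / ((k.factorial : ℂ) * ((n - k).factorial : ℂ)))
            * (t ^ k * t ^ (n - k))
            * (Complex.exp (-(I * φ)) ^ k * Complex.exp (I * φ) ^ (n - k)) := by
      simp only [hfdef, hgdef, mul_pow]
      ring
    rw [hrhs, htpow, ← hexp]
    ring
  rw [heq]
  rw [mul_comm] at key
  convert key using 2 <;> ring
end

section
/- For real z with |z| ≤ 1 and complex a, the Gauss hypergeometric series satisfies ₂F₁(a, 1−a; 1/2; z) · √(1−z) = cos((2a−1) arcsin √z) whenever 0 ≤ z < 1, where ₂F₁(a,b;c;z) = Σ_{n≥0} (a)_n (b)_n z^n / ((c)_n n!). -/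
open Complex

noncomputable section HypAux

open Filter Topology

lemma poch_succ (a : ℂ) (n : ℕ) : poch a (n+1) = poch a n * (a + n) := rfl

lemma half_add_nat_ne_zero (n : ℕ) : ((1/2 : ℂ) + n) ≠ 0 := by
  intro h
  have h1 : ((1/2 : ℂ) + n).re = 1/2 + n := by simp
  rw [h] at h1
  simp at h1
  nlinarith [Nat.cast_nonneg (α := ℝ) n]

lemma poch_half_ne_zero (n : ℕ) : poch (1/2 : ℂ) n ≠ 0 := by
  induction n with
  | zero => simp [poch]
  | succ k ih => exact mul_ne_zero ih (half_add_nat_ne_zero k)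

/-- coefficients of the hypergeometric series -/
def hc (a : ℂ) (n : ℕ) : ℂ := poch a n * poch (1 - a) n / (poch (1/2) n * (Nat.factorial n))

lemma hc_zero (a : ℂ) : hc a 0 = 1 := by simp [hc, poch]

lemma hc_rec (a : ℂ) (n : ℕ) :
    ((n:ℂ)+1) * ((1/2:ℂ) + n) * hc a (n+1) = (a + n) * (1 - a + n) * hc a n := by
  have h1 := poch_half_ne_zero n
  have h2 : ((Nat.factorial n : ℂ)) ≠ 0 := Nat.cast_ne_zero.2 (Nat.factorial_ne_zero n)
  have h3 := half_add_nat_ne_zero n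
  have h4 : ((n:ℂ)+1) ≠ 0 := Nat.cast_add_one_ne_zero n
  rw [hc, hc, poch_succ, poch_succ, poch_succ, Nat.factorial_succ]
  push_cast
  rw [mul_div_assoc', mul_div_assoc',
    div_eq_div_iff (by exact mul_ne_zero (mul_ne_zero h1 h3) (mul_ne_zero h4 h2))
      (mul_ne_zero h1 h2), ← sub_eq_zero]
  ring

lemma norm_nat_add_one (n : ℕ) : ‖((n:ℂ)+1)‖ = (n:ℝ)+1 := by
  rw [show ((n:ℂ)+1) = (((n:ℝ)+1 : ℝ) : ℂ) by push_cast; ring, Complex.norm_real,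
    Real.norm_of_nonneg (by positivity)]

lemma norm_nat_add_half (n : ℕ) : ‖((1/2:ℂ)+n)‖ = (n:ℝ)+1/2 := by
  rw [show ((1/2:ℂ)+n) = ((((n:ℝ)+1/2) : ℝ) : ℂ) by push_cast; ring, Complex.norm_real,
    Real.norm_of_nonneg (by positivity)]

/-- ratio for the coefficients -/
def rho0 (a : ℂ) (n : ℕ) : ℝ := ‖a + n‖ * ‖1 - a + n‖ / (((n:ℝ)+1) * ((n:ℝ) + 1/2))

lemma hc_norm_rec (a : ℂ) (n : ℕ) : ‖hc a (n+1)‖ = rho0 a n * ‖hc a n‖ := by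
  have h := congrArg norm (hc_rec a n)
  rw [norm_mul, norm_mul, norm_mul, norm_mul, norm_nat_add_one, norm_nat_add_half] at h
  have hpos : (0:ℝ) < ((n:ℝ)+1) * ((n:ℝ)+1/2) := by positivity
  rw [rho0, div_mul_eq_mul_div, eq_div_iff hpos.ne']
  linarith [h]

lemma tendsto_norm_ratio (b : ℂ) (d : ℝ) (hd : 0 < d) :
    Tendsto (fun n : ℕ => ‖b + n‖ / ((n:ℝ) + d)) atTop (𝓝 1) := by
  have hne : ∀ n : ℕ, (((n:ℝ) + d : ℝ) : ℂ) ≠ 0 := by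
    intro n
    simp only [ne_eq, Complex.ofReal_eq_zero]
    positivity
  have key : Tendsto (fun n : ℕ => (b + n) / ((((n:ℝ) + d : ℝ)) : ℂ)) atTop (𝓝 1) := by
    have h2 : Tendsto (fun n : ℕ => (b - d) / ((((n:ℝ) + d : ℝ)) : ℂ)) atTop (𝓝 0) := by
      refine squeeze_zero_norm (a := fun n : ℕ => ‖b - (d:ℂ)‖ / ((n:ℝ) + d)) (fun n => ?_) ?_
      · rw [norm_div, Complex.norm_real, Real.norm_of_nonneg (by positivity)]
      · apply Tendsto.div_atTop (tendsto_const_nhds (x := ‖b - (d:ℂ)‖))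
        exact tendsto_atTop_add_const_right atTop d tendsto_natCast_atTop_atTop
    have h3 : ∀ n : ℕ, (b + n) / ((((n:ℝ) + d : ℝ)) : ℂ) = 1 + (b - d) / ((((n:ℝ) + d : ℝ)) : ℂ) := by
      intro n
      rw [← div_self (hne n), ← add_div]
      congr 1
      push_cast
      ring
    simp only [h3]
    simpa using tendsto_const_nhds.add h2
  have := key.norm
  simp only [norm_div, Complex.norm_real] at this
  simp only [norm_one] at this
  convert this using 2 with n
  rw [Real.norm_of_nonneg (by positivity)]

lemma tendsto_rho0 (a : ℂ) : Tendsto (rho0 a) atTop (𝓝 1) := by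
  have h1 := tendsto_norm_ratio a 1 one_pos
  have h2 := tendsto_norm_ratio (1 - a) (1/2) (by norm_num)
  have := h1.mul h2
  rw [mul_one] at this
  convert this using 2 with n
  rw [rho0, div_mul_div_comm]

lemma summable_norm_of_ratio (dd : ℕ → ℂ) (ρ : ℕ → ℝ)
    (hρ : ∀ n, ‖dd (n+1)‖ ≤ ρ n * ‖dd n‖) (hρ1 : Tendsto ρ atTop (𝓝 1))
    {x : ℝ} (h0 : 0 ≤ x) (h1 : x < 1) : Summable (fun n => ‖dd n‖ * x^n) := by
  set r := (1+x)/2 with hr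
  have hr1 : r < 1 := by rw [hr]; linarith
  have hxr : x < r := by rw [hr]; linarith
  have hev : ∀ᶠ n in atTop, ρ n * x ≤ r :=
    ((hρ1.mul_const x).eventually_lt_const (by simpa using hxr)).mono fun n hn => hn.le
  apply summable_of_ratio_norm_eventually_le hr1
  filter_upwards [hev] with n hn
  rw [Real.norm_of_nonneg (by positivity), Real.norm_of_nonneg (by positivity)]
  calc ‖dd (n+1)‖ * x^(n+1) = (‖dd (n+1)‖) * x * x^n := by ring
    _ ≤ (ρ n * ‖dd n‖) * x * x^n := by
        apply mul_le_mul_of_nonneg_right _ (by positivity)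
        exact mul_le_mul_of_nonneg_right (hρ n) h0
    _ = (ρ n * x) * (‖dd n‖ * x^n) := by ring
    _ ≤ r * (‖dd n‖ * x^n) := mul_le_mul_of_nonneg_right hn (by positivity)

lemma summable_of_ratio' (dd : ℕ → ℂ) (ρ : ℕ → ℝ)
    (hρ : ∀ n, ‖dd (n+1)‖ ≤ ρ n * ‖dd n‖) (hρ1 : Tendsto ρ atTop (𝓝 1))
    {w : ℂ} (hw : ‖w‖ < 1) : Summable (fun n => dd n * w^n) := by
  apply Summable.of_norm
  have := summable_norm_of_ratio dd ρ hρ hρ1 (norm_nonneg w) hw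
  simpa [norm_mul, norm_pow] using this




/-- shifted derivative coefficients -/
def sh (dd : ℕ → ℂ) (n : ℕ) : ℂ := ((n:ℂ)+1) * dd (n+1)

/-- sum of power series -/
def FF (dd : ℕ → ℂ) (w : ℂ) : ℂ := ∑' n, dd n * w^n

lemma summable_mul_pow (dd : ℕ → ℂ)
    (hs : ∀ x : ℝ, 0 ≤ x → x < 1 → Summable (fun n => ‖dd n‖ * x ^ n))
    {w : ℂ} (hw : ‖w‖ < 1) : Summable (fun n => dd n * w^n) := by
  apply Summable.of_norm
  simpa [norm_mul, norm_pow] using hs ‖w‖ (norm_nonneg w) hw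

lemma FF_zero (dd : ℕ → ℂ) : FF dd 0 = dd 0 := by
  rw [FF, tsum_eq_single 0]
  · simp
  · intro n hn
    simp [zero_pow hn]

lemma hasFPower (dd : ℕ → ℂ)
    (hs : ∀ x : ℝ, 0 ≤ x → x < 1 → Summable (fun n => ‖dd n‖ * x ^ n)) :
    HasFPowerSeriesOnBall (FF dd) (FormalMultilinearSeries.ofScalars ℂ dd) 0 1 := by
  constructor
  · apply ENNReal.le_of_forall_nnreal_lt
    intro r hr
    apply FormalMultilinearSeries.le_radius_of_summable
    simp only [FormalMultilinearSeries.ofScalars_norm]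
    exact hs r r.coe_nonneg (by exact_mod_cast hr)
  · exact zero_lt_one
  · intro y hy
    rw [mem_emetric_ball_zero_iff] at hy
    have hy' : ‖y‖ < 1 := by
      rw [← coe_nnnorm y]
      exact_mod_cast (show (‖y‖₊ : ENNReal) < 1 from hy)
    simp only [FormalMultilinearSeries.ofScalars_apply_eq, smul_eq_mul, zero_add]
    exact (summable_mul_pow dd hs hy').hasSum

lemma hasDerivAt_FF (dd : ℕ → ℂ)
    (hs : ∀ x : ℝ, 0 ≤ x → x < 1 → Summable (fun n => ‖dd n‖ * x ^ n))
    (hs' : ∀ x : ℝ, 0 ≤ x → x < 1 → Summable (fun n => ‖sh dd n‖ * x ^ n))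
    {w : ℂ} (hw : ‖w‖ < 1) : HasDerivAt (FF dd) (FF (sh dd) w) w := by
  have hp := hasFPower dd hs
  by_cases hw0 : w = 0
  · subst hw0
    have h := hp.hasFPowerSeriesAt.hasDerivAt
    have hv : (FormalMultilinearSeries.ofScalars ℂ dd 1 fun _ => (1:ℂ)) = dd 1 := by
      rw [FormalMultilinearSeries.ofScalars_apply_eq]
      simp
    rw [hv] at h
    have : FF (sh dd) 0 = dd 1 := by rw [FF_zero]; simp [sh]
    rw [this]
    exact h
  · have hmem : w ∈ Metric.eball (0:ℂ) 1 := by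
      rw [mem_emetric_ball_zero_iff]
      exact (show ((‖w‖₊ : NNReal) : ENNReal) < 1 by exact_mod_cast hw)
    have hsum2 := (hp.fderiv).hasSum hmem
    have happ := (ContinuousLinearMap.apply ℂ ℂ w).hasSum hsum2
    simp only [ContinuousLinearMap.apply_apply] at happ
    have hterm : ∀ n : ℕ, ((FormalMultilinearSeries.ofScalars ℂ dd).derivSeries n (fun _ => w)) w
        = (sh dd n * w^n) * w := by
      intro n
      rw [FormalMultilinearSeries.derivSeries_apply_diag]
      simp only [FormalMultilinearSeries.ofScalars_apply_eq, smul_eq_mul, nsmul_eq_mul, sh]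
      push_cast
      ring
    rw [funext hterm] at happ
    have hG : HasSum (fun n => sh dd n * w^n) (FF (sh dd) w) := (summable_mul_pow _ hs' hw).hasSum
    have huniq : fderiv ℂ (FF dd) (0 + w) w = FF (sh dd) w * w := happ.unique (hG.mul_right w)
    rw [zero_add] at huniq
    have hdiff : DifferentiableAt ℂ (FF dd) w :=
      (hp.differentiableOn w hmem).differentiableAt (Metric.isOpen_eball.mem_nhds hmem)
    have hD := hdiff.hasDerivAt
    have hlin : (fderiv ℂ (FF dd) w) w = w * (fderiv ℂ (FF dd) w) 1 := by
      have := (fderiv ℂ (FF dd) w).map_smul w (1:ℂ)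
      simpa [smul_eq_mul] using this
    rw [hlin, fderiv_apply_one_eq_deriv] at huniq
    have : deriv (FF dd) w = FF (sh dd) w := by
      rw [mul_comm (FF (sh dd) w) w] at huniq
      exact mul_left_cancel₀ hw0 huniq
    rwa [this] at hD



lemma ode_hasSum (a : ℂ) {w : ℂ}
    (h0 : HasSum (fun n => hc a n * w^n) (FF (hc a) w))
    (h1 : HasSum (fun n => sh (hc a) n * w^n) (FF (sh (hc a)) w))
    (h2 : HasSum (fun n => sh (sh (hc a)) n * w^n) (FF (sh (sh (hc a))) w)) :
    w * (1-w) * FF (sh (sh (hc a))) w + (1/2 - 2*w) * FF (sh (hc a)) w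
      - a*(1-a) * FF (hc a) w = 0 := by
  set F0 := FF (hc a) w
  set F1 := FF (sh (hc a)) w
  set F2 := FF (sh (sh (hc a))) w
  -- u1 : HasSum (n(n+1) hc(n+1) w^n) (F2 * w)
  have Hu1 : HasSum (fun n : ℕ => (n:ℂ) * ((n:ℂ)+1) * hc a (n+1) * w^n) (F2 * w) := by
    have A := h2.mul_right w
    have e : (fun n => sh (sh (hc a)) n * w^n * w)
        = (fun n => ((n+1:ℕ):ℂ) * (((n+1:ℕ):ℂ)+1) * hc a ((n+1)+1) * w^(n+1)) := by
      funext m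
      simp only [sh, pow_succ]
      push_cast
      ring
    rw [e] at A
    have := (hasSum_nat_add_iff
      (f := fun n : ℕ => (n:ℂ) * ((n:ℂ)+1) * hc a (n+1) * w^n) 1).mp (by exact_mod_cast A)
    simpa using this
  -- u2 : HasSum (n(n-1) hc n w^n) (F2 * (w*w))
  have Hu2 : HasSum (fun n : ℕ => (n:ℂ) * ((n:ℂ)-1) * hc a n * w^n) (F2 * (w*w)) := by
    have A := h2.mul_right (w*w)
    have e : (fun n => sh (sh (hc a)) n * w^n * (w*w))
        = (fun n => ((n+2:ℕ):ℂ) * (((n+2:ℕ):ℂ)-1) * hc a (n+2) * w^(n+2)) := by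
      funext m
      simp only [sh, pow_succ]
      push_cast
      ring
    rw [e] at A
    have := (hasSum_nat_add_iff
      (f := fun n : ℕ => (n:ℂ) * ((n:ℂ)-1) * hc a n * w^n) 2).mp (by exact_mod_cast A)
    simpa [Finset.sum_range_succ] using this
  -- u3 : HasSum ((n+1) hc(n+1) w^n) F1
  have Hu3 : HasSum (fun n : ℕ => ((n:ℂ)+1) * hc a (n+1) * w^n) F1 := by
    have e : (fun n : ℕ => ((n:ℂ)+1) * hc a (n+1) * w^n) = (fun n => sh (hc a) n * w^n) := by
      funext m
      simp only [sh]
    rw [e]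
    exact h1
  -- u4 : HasSum (n hc n w^n) (F1 * w)
  have Hu4 : HasSum (fun n : ℕ => (n:ℂ) * hc a n * w^n) (F1 * w) := by
    have A := h1.mul_right w
    have e : (fun n => sh (hc a) n * w^n * w)
        = (fun n => ((n+1:ℕ):ℂ) * hc a (n+1) * w^(n+1)) := by
      funext m
      simp only [sh, pow_succ]
      push_cast
      ring
    rw [e] at A
    have := (hasSum_nat_add_iff
      (f := fun n : ℕ => (n:ℂ) * hc a n * w^n) 1).mp (by exact_mod_cast A)
    simpa using this
  have Hcomb := (((Hu1.add (Hu3.mul_left (1/2))).sub Hu2).sub (Hu4.mul_left 2)).sub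
    (h0.mul_left (a*(1-a)))
  have hz : (fun n : ℕ => ((n:ℂ) * ((n:ℂ)+1) * hc a (n+1) * w^n
      + (1/2) * (((n:ℂ)+1) * hc a (n+1) * w^n)
      - (n:ℂ) * ((n:ℂ)-1) * hc a n * w^n
      - 2 * ((n:ℂ) * hc a n * w^n)
      - a*(1-a) * (hc a n * w^n))) = (fun _ => (0:ℂ)) := by
    funext n
    linear_combination (w^n) * hc_rec a n
  rw [hz] at Hcomb
  have hT : F2 * w + 1/2 * F1 - F2 * (w*w) - 2 * (F1 * w) - a*(1-a) * F0 = 0 :=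
    (hasSum_zero.unique Hcomb).symm
  linear_combination hT
section P3
open Complex Filter Topology

/-- ratio-boundedness property ensuring radius ≥ 1 -/
def Good (dd : ℕ → ℂ) : Prop :=
  ∃ ρ : ℕ → ℝ, (∀ n, ‖dd (n+1)‖ = ρ n * ‖dd n‖) ∧ Tendsto ρ atTop (𝓝 1)

lemma good_hc (a : ℂ) : Good (hc a) :=
  ⟨rho0 a, hc_norm_rec a, tendsto_rho0 a⟩

lemma Good.sh {dd : ℕ → ℂ} (h : Good dd) : Good (sh dd) := by
  obtain ⟨ρ, hρ, ht⟩ := h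
  refine ⟨fun n => (((n:ℝ)+2)/((n:ℝ)+1)) * ρ (n+1), fun n => ?_, ?_⟩
  · simp only [_root_.sh]
    rw [norm_mul, norm_mul, hρ (n+1), norm_nat_add_one, norm_nat_add_one]
    have h1 : ((n:ℝ)+1) ≠ 0 := by positivity
    push_cast
    field_simp
    ring
  · have h2 : Tendsto (fun n : ℕ => ((n:ℝ)+2)/((n:ℝ)+1)) atTop (𝓝 1) := by
      have h3 : ∀ n : ℕ, ((n:ℝ)+2)/((n:ℝ)+1) = 1 + 1/((n:ℝ)+1) := by
        intro n
        have h1 : ((n:ℝ)+1) ≠ 0 := by positivity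
        field_simp
        ring
      simp only [h3]
      simpa using tendsto_const_nhds.add (tendsto_one_div_add_atTop_nhds_zero_nat (𝕜 := ℝ))
    have h4 : Tendsto (fun n => ρ (n+1)) atTop (𝓝 1) := ht.comp (tendsto_add_atTop_nat 1)
    simpa using h2.mul h4

lemma Good.summable_norm {dd : ℕ → ℂ} (h : Good dd) :
    ∀ x : ℝ, 0 ≤ x → x < 1 → Summable (fun n => ‖dd n‖ * x ^ n) := by
  obtain ⟨ρ, hρ, ht⟩ := h
  intro x h0 h1
  exact summable_norm_of_ratio dd ρ (fun n => (hρ n).le) ht h0 h1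

/-- sine, as a map ℝ → ℂ -/
def sC (θ : ℝ) : ℂ := (Real.sin θ : ℂ)
/-- cosine, as a map ℝ → ℂ -/
def cC (θ : ℝ) : ℂ := (Real.cos θ : ℂ)

lemma hasDerivAt_sC (θ : ℝ) : HasDerivAt sC (cC θ) θ :=
  (Real.hasDerivAt_sin θ).ofReal_comp

lemma hasDerivAt_cC (θ : ℝ) : HasDerivAt cC (-sC θ) θ := by
  have h := (Real.hasDerivAt_cos θ).ofReal_comp
  have hv : (-sC θ) = ((-Real.sin θ : ℝ) : ℂ) := by rw [sC]; push_cast; ring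
  rw [hv]
  exact h

/-- composition of a complex-differentiable function with a real curve -/
lemma hasDerivAt_comp_c (u : ℝ → ℂ) {u' : ℂ} {θ : ℝ} {f : ℂ → ℂ} {f' : ℂ} {z : ℂ}
    (hf : HasDerivAt f f' z) (hu : HasDerivAt u u' θ) (hz : u θ = z) :
    HasDerivAt (fun t => f (u t)) (f' * u') θ := by
  subst hz
  have h := (hf.hasFDerivAt.restrictScalars ℝ).comp_hasDerivAt θ hu
  simpa [Function.comp_def, mul_comm] using h

lemma hasDerivAt_mu (μ : ℂ) (θ : ℝ) : HasDerivAt (fun t : ℝ => μ * (t:ℂ)) μ θ := by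
  have h : HasDerivAt (fun t : ℝ => ((t:ℝ):ℂ)) 1 θ := by
    exact Complex.ofRealCLM.hasDerivAt (x := θ)
  simpa using h.const_mul μ

lemma hasDerivAt_cos_mu (μ : ℂ) (θ : ℝ) :
    HasDerivAt (fun t : ℝ => Complex.cos (μ * t)) (-Complex.sin (μ*θ) * μ) θ :=
  hasDerivAt_comp_c _ (Complex.hasDerivAt_cos (μ*θ)) (hasDerivAt_mu μ θ) rfl

lemma hasDerivAt_sin_mu (μ : ℂ) (θ : ℝ) :
    HasDerivAt (fun t : ℝ => Complex.sin (μ * t)) (Complex.cos (μ*θ) * μ) θ :=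
  hasDerivAt_comp_c _ (Complex.hasDerivAt_sin (μ*θ)) (hasDerivAt_mu μ θ) rfl

lemma wnorm_lt {θ : ℝ} (hθ : θ ∈ Set.Ioo (-(Real.pi/2)) (Real.pi/2)) :
    ‖sC θ * sC θ‖ < 1 := by
  have hcos := Real.cos_pos_of_mem_Ioo hθ
  rw [norm_mul, sC, Complex.norm_real, Real.norm_eq_abs]
  nlinarith [Real.sin_sq_add_cos_sq θ, abs_nonneg (Real.sin θ), _root_.sq_abs (Real.sin θ)]

lemma pyth (θ : ℝ) : sC θ * sC θ + cC θ * cC θ = 1 := by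
  rw [sC, cC]
  norm_cast
  nlinarith [Real.sin_sq_add_cos_sq θ]

/-- G(θ) = cos θ · f(sin²θ) -/
def GG (a : ℂ) (θ : ℝ) : ℂ := cC θ * FF (hc a) (sC θ * sC θ)

def GG1 (a : ℂ) (θ : ℝ) : ℂ :=
  -sC θ * FF (hc a) (sC θ * sC θ) + 2 * sC θ * (cC θ * cC θ) * FF (sh (hc a)) (sC θ * sC θ)

def EE (a : ℂ) (θ : ℝ) : ℂ := GG a θ - Complex.cos ((2*a-1) * θ)

def EE1 (a : ℂ) (θ : ℝ) : ℂ := GG1 a θ + (2*a-1) * Complex.sin ((2*a-1) * θ)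

def qq (a : ℂ) (θ : ℝ) : ℂ :=
  EE1 a θ * Complex.cos ((2*a-1)*θ) + (2*a-1) * EE a θ * Complex.sin ((2*a-1)*θ)

def rr (a : ℂ) (θ : ℝ) : ℂ :=
  EE1 a θ * Complex.sin ((2*a-1)*θ) - (2*a-1) * EE a θ * Complex.cos ((2*a-1)*θ)

lemma hasDerivAt_GG (a : ℂ) {θ : ℝ} (hθ : θ ∈ Set.Ioo (-(Real.pi/2)) (Real.pi/2)) :
    HasDerivAt (GG a) (GG1 a θ) θ := by
  have hs := hasDerivAt_sC θ
  have hcd := hasDerivAt_cC θ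
  have hw : HasDerivAt (fun t => sC t * sC t) (cC θ * sC θ + sC θ * cC θ) θ := hs.mul hs
  have hF : HasDerivAt (FF (hc a)) (FF (sh (hc a)) (sC θ * sC θ)) (sC θ * sC θ) :=
    hasDerivAt_FF _ (good_hc a).summable_norm (good_hc a).sh.summable_norm (wnorm_lt hθ)
  have hFw := hasDerivAt_comp_c (fun t => sC t * sC t) hF hw rfl
  have hG := hcd.mul hFw
  have : HasDerivAt (GG a)
    (-sC θ * FF (hc a) (sC θ * sC θ) +
      cC θ * (FF (sh (hc a)) (sC θ * sC θ) * (cC θ * sC θ + sC θ * cC θ))) θ := hG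
  convert this using 1
  rw [GG1]
  ring

lemma hasDerivAt_GG1 (a : ℂ) {θ : ℝ} (hθ : θ ∈ Set.Ioo (-(Real.pi/2)) (Real.pi/2)) :
    HasDerivAt (GG1 a) (-(2*a-1)^2 * GG a θ) θ := by
  have hs := hasDerivAt_sC θ
  have hcd := hasDerivAt_cC θ
  have hw : HasDerivAt (fun t => sC t * sC t) (cC θ * sC θ + sC θ * cC θ) θ := hs.mul hs
  have hF0 : HasDerivAt (FF (hc a)) (FF (sh (hc a)) (sC θ * sC θ)) (sC θ * sC θ) :=
    hasDerivAt_FF _ (good_hc a).summable_norm (good_hc a).sh.summable_norm (wnorm_lt hθ)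
  have hF1 : HasDerivAt (FF (sh (hc a))) (FF (sh (sh (hc a))) (sC θ * sC θ)) (sC θ * sC θ) :=
    hasDerivAt_FF _ (good_hc a).sh.summable_norm (good_hc a).sh.sh.summable_norm (wnorm_lt hθ)
  have hF0w := hasDerivAt_comp_c (fun t => sC t * sC t) hF0 hw rfl
  have hF1w := hasDerivAt_comp_c (fun t => sC t * sC t) hF1 hw rfl
  have hA := (hs.neg).mul hF0w
  have hBB : HasDerivAt (fun t => 2 * sC t * (cC t * cC t))
      (2 * cC θ * (cC θ * cC θ) + 2 * sC θ * (-sC θ * cC θ + cC θ * -sC θ)) θ :=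
    ((hs.const_mul (2:ℂ)).mul (hcd.mul hcd))
  have hC := hBB.mul hF1w
  have htot := hA.add hC
  -- now identify
  have hode : (sC θ * sC θ) * (1-(sC θ * sC θ)) * FF (sh (sh (hc a))) (sC θ * sC θ)
      + (1/2 - 2*(sC θ * sC θ)) * FF (sh (hc a)) (sC θ * sC θ)
      - a*(1-a) * FF (hc a) (sC θ * sC θ) = 0 := by
    have hn := wnorm_lt hθ
    exact ode_hasSum a
      (summable_mul_pow _ (good_hc a).summable_norm hn).hasSum
      (summable_mul_pow _ (good_hc a).sh.summable_norm hn).hasSum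
      (summable_mul_pow _ (good_hc a).sh.sh.summable_norm hn).hasSum
  have hpy := pyth θ
  refine htot.congr_deriv (Eq.symm ?_)
  rw [GG, Pi.neg_apply]
  linear_combination (-4 * cC θ) * hode +
    (-2 * cC θ * FF (sh (hc a)) (sC θ * sC θ) -
      4 * (sC θ * sC θ) * cC θ * FF (sh (sh (hc a))) (sC θ * sC θ)) * hpy

end P3

section Final
open Complex Filter Topology
section P4
open Complex Filter Topology

lemma hasDerivAt_EE (a : ℂ) {θ : ℝ} (hθ : θ ∈ Set.Ioo (-(Real.pi/2)) (Real.pi/2)) :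
    HasDerivAt (EE a) (EE1 a θ) θ := by
  have h := (hasDerivAt_GG a hθ).sub (hasDerivAt_cos_mu (2*a-1) θ)
  have : HasDerivAt (EE a) (GG1 a θ - (-Complex.sin ((2*a-1)*θ) * (2*a-1))) θ := h
  convert this using 1
  rw [EE1]
  ring

lemma hasDerivAt_EE1 (a : ℂ) {θ : ℝ} (hθ : θ ∈ Set.Ioo (-(Real.pi/2)) (Real.pi/2)) :
    HasDerivAt (EE1 a) (-(2*a-1)^2 * EE a θ) θ := by
  have h := (hasDerivAt_GG1 a hθ).add ((hasDerivAt_sin_mu (2*a-1) θ).const_mul (2*a-1))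
  have : HasDerivAt (EE1 a)
      (-(2*a-1)^2 * GG a θ + (2*a-1) * (Complex.cos ((2*a-1)*θ) * (2*a-1))) θ := h
  convert this using 1
  rw [EE]
  ring

lemma hasDerivAt_qq (a : ℂ) {θ : ℝ} (hθ : θ ∈ Set.Ioo (-(Real.pi/2)) (Real.pi/2)) :
    HasDerivAt (qq a) 0 θ := by
  have h := ((hasDerivAt_EE1 a hθ).mul (hasDerivAt_cos_mu (2*a-1) θ)).add
    (((hasDerivAt_EE a hθ).const_mul (2*a-1)).mul (hasDerivAt_sin_mu (2*a-1) θ))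
  have h2 : HasDerivAt (qq a)
      (-(2*a-1)^2 * EE a θ * Complex.cos ((2*a-1)*θ)
        + EE1 a θ * (-Complex.sin ((2*a-1)*θ) * (2*a-1))
        + ((2*a-1) * EE1 a θ * Complex.sin ((2*a-1)*θ)
          + (2*a-1) * EE a θ * (Complex.cos ((2*a-1)*θ) * (2*a-1)))) θ := h
  convert h2 using 1
  ring

lemma hasDerivAt_rr (a : ℂ) {θ : ℝ} (hθ : θ ∈ Set.Ioo (-(Real.pi/2)) (Real.pi/2)) :
    HasDerivAt (rr a) 0 θ := by
  have h := ((hasDerivAt_EE1 a hθ).mul (hasDerivAt_sin_mu (2*a-1) θ)).sub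
    (((hasDerivAt_EE a hθ).const_mul (2*a-1)).mul (hasDerivAt_cos_mu (2*a-1) θ))
  have h2 : HasDerivAt (rr a)
      (-(2*a-1)^2 * EE a θ * Complex.sin ((2*a-1)*θ)
        + EE1 a θ * (Complex.cos ((2*a-1)*θ) * (2*a-1))
        - ((2*a-1) * EE1 a θ * Complex.cos ((2*a-1)*θ)
          + (2*a-1) * EE a θ * (-Complex.sin ((2*a-1)*θ) * (2*a-1)))) θ := h
  convert h2 using 1
  ring

lemma sC_zero : sC 0 = 0 := by simp [sC]
lemma cC_zero : cC 0 = 1 := by simp [cC]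

lemma EE_zero (a : ℂ) : EE a 0 = 0 := by
  rw [EE, GG, sC_zero, cC_zero]
  simp [FF_zero, hc_zero]

lemma EE1_zero (a : ℂ) : EE1 a 0 = 0 := by
  rw [EE1, GG1, sC_zero]
  simp

lemma qq_zero (a : ℂ) : qq a 0 = 0 := by
  rw [qq, EE_zero, EE1_zero]
  simp

lemma rr_zero (a : ℂ) : rr a 0 = 0 := by
  rw [rr, EE_zero, EE1_zero]
  simp

lemma EE_eq_zero (a : ℂ) {θ₀ : ℝ} (h0 : 0 ≤ θ₀) (h1 : θ₀ < Real.pi/2) :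
    EE a θ₀ = 0 := by
  have hpi := Real.pi_pos
  have hIcc : Set.Icc (0:ℝ) θ₀ ⊆ Set.Ioo (-(Real.pi/2)) (Real.pi/2) := by
    intro x hx
    constructor
    · calc -(Real.pi/2) < 0 := by linarith
        _ ≤ x := hx.1
    · exact lt_of_le_of_lt hx.2 h1
  have hq0 : ∀ x ∈ Set.Icc (0:ℝ) θ₀, qq a x = qq a 0 := by
    apply constant_of_has_deriv_right_zero
    · exact fun x hx => (hasDerivAt_qq a (hIcc hx)).continuousAt.continuousWithinAt
    · exact fun x hx => (hasDerivAt_qq a (hIcc (Set.Ico_subset_Icc_self hx))).hasDerivWithinAt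
  have hr0 : ∀ x ∈ Set.Icc (0:ℝ) θ₀, rr a x = rr a 0 := by
    apply constant_of_has_deriv_right_zero
    · exact fun x hx => (hasDerivAt_rr a (hIcc hx)).continuousAt.continuousWithinAt
    · exact fun x hx => (hasDerivAt_rr a (hIcc (Set.Ico_subset_Icc_self hx))).hasDerivWithinAt
  have hE1 : ∀ x ∈ Set.Icc (0:ℝ) θ₀, EE1 a x = 0 := by
    intro x hx
    have hqx : qq a x = 0 := by rw [hq0 x hx, qq_zero]
    have hrx : rr a x = 0 := by rw [hr0 x hx, rr_zero]
    rw [qq] at hqx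
    rw [rr] at hrx
    have hpy := Complex.sin_sq_add_cos_sq ((2*a-1)*(x:ℂ))
    linear_combination Complex.cos ((2*a-1)*(x:ℝ)) * hqx + Complex.sin ((2*a-1)*(x:ℝ)) * hrx
      - EE1 a x * hpy
  have hE0 : ∀ x ∈ Set.Icc (0:ℝ) θ₀, EE a x = EE a 0 := by
    apply constant_of_has_deriv_right_zero
    · exact fun x hx => (hasDerivAt_EE a (hIcc hx)).continuousAt.continuousWithinAt
    · intro x hx
      have h := hasDerivAt_EE a (hIcc (Set.Ico_subset_Icc_self hx))
      rw [hE1 x (Set.Ico_subset_Icc_self hx)] at h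
      exact h.hasDerivWithinAt
  rw [hE0 θ₀ (Set.right_mem_Icc.2 h0), EE_zero]

end P4

theorem hypergeom_cos (a : ℂ) (z : ℝ) (hz0 : 0 ≤ z) (hz1 : z < 1) :
    (∑' n : ℕ, poch a n * poch (1 - a) n * (z : ℂ) ^ n /
        (poch (1 / 2) n * Nat.factorial n)) * (Real.sqrt (1 - z) : ℂ) =
      Complex.cos ((2 * a - 1) * Real.arcsin (Real.sqrt z)) := by
  set θ := Real.arcsin (Real.sqrt z) with hθdef
  have hsq0 : 0 ≤ Real.sqrt z := Real.sqrt_nonneg z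
  have hsq1 : Real.sqrt z < 1 := by
    rw [show (1:ℝ) = Real.sqrt 1 by simp]
    exact Real.sqrt_lt_sqrt hz0 hz1
  have h0 : 0 ≤ θ := Real.arcsin_nonneg.2 hsq0
  have h1 : θ < Real.pi/2 := Real.arcsin_lt_pi_div_two.2 hsq1
  have hsin : Real.sin θ = Real.sqrt z := Real.sin_arcsin (by linarith) hsq1.le
  have hcos : Real.cos θ = Real.sqrt (1 - z) := by
    rw [hθdef, Real.cos_arcsin]
    congr 1
    rw [Real.sq_sqrt hz0]
  have hE := EE_eq_zero a h0 h1
  rw [EE, sub_eq_zero] at hE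
  have hw : sC θ * sC θ = (z:ℂ) := by
    rw [sC, hsin, ← Complex.ofReal_mul, Real.mul_self_sqrt hz0]
  have hF : (∑' n : ℕ, poch a n * poch (1 - a) n * (z : ℂ) ^ n /
      (poch (1 / 2) n * Nat.factorial n)) = FF (hc a) (z:ℂ) := by
    rw [FF]
    apply tsum_congr
    intro n
    rw [hc]
    ring
  rw [hF]
  rw [GG, hw, cC, hcos] at hE
  rw [mul_comm]
  exact hE

end Final
end HypAux
end
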